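/- arXiv:2409.07810 — 4 statements merged into one kernel-verified Lean document; each statement's English description precedes it below -/
import Mathlib

section
/- For every Laurent polynomial p of degree at most n (i.e., p(z) = ∑_{k=−n}^{n} c_k z^k), the average of the n-point Szegő rule with parameter τ and the n-point anti-Szegő rule with parameter −τ is exact: I(p) = (1/2)[S_n(p) + S̃_n(p)]. -/
open Complex Real Finset

private lemma geom_aux (n : ℕ) (v : ℂ) (hv : v ≠ 1) (hvn : v ^ n = 1) :
    ∑ k ∈ Finset.Icc 1 n, v ^ k = 0 := by
  rw [← Finset.Ico_add_one_right_eq_Icc, Finset.sum_Ico_eq_sum_range]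
  simp only [Nat.add_sub_cancel, Nat.succ_sub_one, pow_add, pow_one]
  rw [← Finset.mul_sum, geom_sum_eq hv, hvn, sub_self, zero_div, mul_zero]

private lemma exp_ne_one_aux (n : ℕ) (j : ℤ) (hj0 : j ≠ 0) (hjn : |j| < (n : ℤ)) :
    Complex.exp (2 * (j : ℂ) * (Real.pi : ℂ) * Complex.I / (n : ℂ)) ≠ 1 := by
  have hn0 : (n : ℂ) ≠ 0 := by
    have : 0 < (n : ℤ) := lt_of_le_of_lt (abs_nonneg j) hjn
    exact_mod_cast Nat.cast_ne_zero.mpr (by exact_mod_cast this.ne')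
  have hπ : (Real.pi : ℂ) ≠ 0 := by exact_mod_cast Real.pi_ne_zero
  intro h
  rw [Complex.exp_eq_one_iff] at h
  obtain ⟨m, hm⟩ := h
  have h2 : (2 * (Real.pi : ℂ) * Complex.I) * ((j : ℂ) / n) =
      (2 * (Real.pi : ℂ) * Complex.I) * m := by
    linear_combination hm
  have h3 : ((j : ℂ) / n) = m :=
    mul_left_cancel₀ (by simp [hπ, Complex.I_ne_zero]) h2
  have h4 : (j : ℂ) = (m * n : ℤ) := by
    push_cast
    field_simp at h3
    linear_combination h3
  have h5 : j = m * n := by exact_mod_cast h4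
  have hm0 : m ≠ 0 := by rintro rfl; simp at h5; exact hj0 h5
  have : (n : ℤ) ≤ |j| := by
    rw [h5, abs_mul, abs_of_nonneg (by positivity : (0:ℤ) ≤ (n:ℤ))]
    nlinarith [Int.one_le_abs hm0]
  omega

private lemma node_sum_aux (n : ℕ) (hn : 1 ≤ n) (θ : ℝ) (j : ℤ)
    (hj : j ∈ Finset.Icc (-(n : ℤ)) (n : ℤ)) (hj0 : j ≠ 0) :
    ∑ k ∈ Finset.Icc 1 n,
      (Complex.exp ((j : ℂ) * (((θ : ℂ) + 2 * (k : ℂ) * (Real.pi : ℂ)) / (n : ℂ) * Complex.I)) +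
       Complex.exp ((j : ℂ) * (((θ : ℂ) + (2 * (k : ℂ) + 1) * (Real.pi : ℂ)) / (n : ℂ) * Complex.I))) = 0 := by
  have hn0 : (n : ℂ) ≠ 0 := Nat.cast_ne_zero.mpr (by omega)
  set u : ℂ := Complex.exp ((j : ℂ) * (Real.pi : ℂ) * Complex.I / (n : ℂ)) with hu
  set A : ℂ := Complex.exp ((j : ℂ) * (θ : ℂ) * Complex.I / (n : ℂ)) with hA
  have hterm : ∀ k ∈ Finset.Icc 1 n,
      (Complex.exp ((j : ℂ) * (((θ : ℂ) + 2 * (k : ℂ) * (Real.pi : ℂ)) / (n : ℂ) * Complex.I)) +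
       Complex.exp ((j : ℂ) * (((θ : ℂ) + (2 * (k : ℂ) + 1) * (Real.pi : ℂ)) / (n : ℂ) * Complex.I)))
      = A * (1 + u) * (u ^ 2) ^ k := by
    intro k _
    have h1 : Complex.exp (((2 * k : ℕ) : ℂ) * ((j : ℂ) * (Real.pi : ℂ) * Complex.I / (n : ℂ)))
        = (u ^ 2) ^ k := by
      rw [Complex.exp_nat_mul, ← hu, ← pow_mul]
    have h2 : Complex.exp (((2 * k + 1 : ℕ) : ℂ) * ((j : ℂ) * (Real.pi : ℂ) * Complex.I / (n : ℂ)))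
        = (u ^ 2) ^ k * u := by
      rw [Complex.exp_nat_mul, ← hu, pow_succ, ← pow_mul]
    have e1 : (j : ℂ) * (((θ : ℂ) + 2 * (k : ℂ) * (Real.pi : ℂ)) / (n : ℂ) * Complex.I)
        = (j : ℂ) * (θ : ℂ) * Complex.I / (n : ℂ)
          + ((2 * k : ℕ) : ℂ) * ((j : ℂ) * (Real.pi : ℂ) * Complex.I / (n : ℂ)) := by
      push_cast; ring
    have e2 : (j : ℂ) * (((θ : ℂ) + (2 * (k : ℂ) + 1) * (Real.pi : ℂ)) / (n : ℂ) * Complex.I)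
        = (j : ℂ) * (θ : ℂ) * Complex.I / (n : ℂ)
          + ((2 * k + 1 : ℕ) : ℂ) * ((j : ℂ) * (Real.pi : ℂ) * Complex.I / (n : ℂ)) := by
      push_cast; ring
    rw [e1, e2, Complex.exp_add, Complex.exp_add, h1, h2, ← hA]
    ring
  rw [Finset.sum_congr rfl hterm, ← Finset.mul_sum]
  rcases eq_or_ne (|j|) (n : ℤ) with hjn | hjn
  · -- j = ±n : u = -1
    have hu1 : u = -1 := by
      rcases abs_eq (by positivity : (0:ℤ) ≤ (n:ℤ)) |>.mp hjn with h | h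
      · rw [hu, h]
        rw [show ((n : ℤ) : ℂ) * (Real.pi : ℂ) * Complex.I / (n : ℂ)
            = (Real.pi : ℂ) * Complex.I by push_cast; field_simp]
        exact Complex.exp_pi_mul_I
      · rw [hu, h]
        rw [show (((-(n:ℤ)) : ℤ) : ℂ) * (Real.pi : ℂ) * Complex.I / (n : ℂ)
            = -((Real.pi : ℂ) * Complex.I) by push_cast; field_simp]
        rw [Complex.exp_neg, Complex.exp_pi_mul_I]
        norm_num
    rw [hu1]
    ring
  · -- |j| < n : geometric sum vanishes
    have hjlt : |j| < (n : ℤ) := by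
      rcases Finset.mem_Icc.mp hj with ⟨h1, h2⟩
      rcases lt_or_eq_of_le (abs_le.mpr ⟨h1, h2⟩ : |j| ≤ (n:ℤ)) with h | h
      · exact h
      · exact absurd h hjn
    have hv : u ^ 2 = Complex.exp (2 * (j : ℂ) * (Real.pi : ℂ) * Complex.I / (n : ℂ)) := by
      rw [hu, ← Complex.exp_nat_mul]
      congr 1
      push_cast; ring
    have hvne : u ^ 2 ≠ 1 := by rw [hv]; exact exp_ne_one_aux n j hj0 hjlt
    have hvn : (u ^ 2) ^ n = 1 := by
      rw [hv, ← Complex.exp_nat_mul]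
      rw [show ((n : ℕ) : ℂ) * (2 * (j : ℂ) * (Real.pi : ℂ) * Complex.I / (n : ℂ))
          = (j : ℂ) * (2 * (Real.pi : ℂ) * Complex.I) by field_simp]
      exact Complex.exp_int_mul_two_pi_mul_I j
    rw [geom_aux n (u ^ 2) hvne hvn, mul_zero]

theorem averaged_rule_exact_on_laurent (n : ℕ) (hn : 1 ≤ n)
    (τ : ℂ) (hτ : ‖τ‖ = 1) (θ : ℝ) (hθ : τ = -Complex.exp (θ * Complex.I))
    (c : ℤ → ℂ) (p : ℂ → ℂ)
    (hp : ∀ z : ℂ, z ≠ 0 → p z = ∑ k ∈ Finset.Icc (-(n : ℤ)) (n : ℤ), c k * z ^ k)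
    (z zt : ℕ → ℂ)
    (hz : ∀ k ∈ Finset.Icc 1 n, z k = Complex.exp (((θ + 2 * k * Real.pi) / n) * Complex.I))
    (hzt : ∀ k ∈ Finset.Icc 1 n, zt k = Complex.exp (((θ + (2 * k + 1) * Real.pi) / n) * Complex.I)) :
    (1 / (2 * Real.pi : ℂ)) * ∫ t in (-Real.pi)..Real.pi, p (Complex.exp (t * Complex.I)) =
      (1 / 2) * ((1 / (n : ℂ)) * ∑ k ∈ Finset.Icc 1 n, p (z k) +
                 (1 / (n : ℂ)) * ∑ k ∈ Finset.Icc 1 n, p (zt k)) := by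
  have hn0 : (n : ℂ) ≠ 0 := Nat.cast_ne_zero.mpr (by omega)
  have hπ : (Real.pi : ℂ) ≠ 0 := by exact_mod_cast Real.pi_ne_zero
  set J : Finset ℤ := Finset.Icc (-(n : ℤ)) (n : ℤ) with hJ
  -- LHS = c 0
  have hLHS : (1 / (2 * Real.pi : ℂ)) * ∫ t in (-Real.pi)..Real.pi,
      p (Complex.exp (t * Complex.I)) = c 0 := by
    have hpt : ∀ t : ℝ, p (Complex.exp ((t : ℂ) * Complex.I))
        = ∑ j ∈ J, c j * Complex.exp ((j : ℂ) * Complex.I * (t : ℂ)) := by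
      intro t
      rw [hp _ (Complex.exp_ne_zero _)]
      refine Finset.sum_congr rfl fun j _ => ?_
      rw [← Complex.exp_int_mul]
      congr 2
      ring
    have hint : ∫ t in (-Real.pi)..Real.pi, p (Complex.exp ((t : ℂ) * Complex.I))
        = ∑ j ∈ J, ∫ t in (-Real.pi)..Real.pi,
            c j * Complex.exp ((j : ℂ) * Complex.I * (t : ℂ)) := by
      rw [intervalIntegral.integral_congr (g := fun t =>
        ∑ j ∈ J, c j * Complex.exp ((j : ℂ) * Complex.I * (t : ℂ)))
        (fun t _ => hpt t)]
      exact intervalIntegral.integral_finset_sum fun j _ =>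
        (Continuous.intervalIntegrable (by fun_prop) _ _)
    have hval : ∀ j ∈ J, (∫ t in (-Real.pi)..Real.pi,
        c j * Complex.exp ((j : ℂ) * Complex.I * (t : ℂ)))
        = if j = 0 then c 0 * (2 * Real.pi) else 0 := by
      intro j _
      rcases eq_or_ne j 0 with rfl | hj0
      · simp only [if_pos rfl, Int.cast_zero, zero_mul, Complex.exp_zero, mul_one]
        rw [intervalIntegral.integral_const]
        push_cast
        simp [sub_neg_eq_add, smul_eq_mul]
        try ring
      · rw [if_neg hj0, intervalIntegral.integral_const_mul]
        have hc0 : (j : ℂ) * Complex.I ≠ 0 :=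
          mul_ne_zero (Int.cast_ne_zero.mpr hj0) Complex.I_ne_zero
        rw [integral_exp_mul_complex hc0]
        have : Complex.exp ((j : ℂ) * Complex.I * (Real.pi : ℂ))
            = Complex.exp ((j : ℂ) * Complex.I * ((-Real.pi : ℝ) : ℂ)) := by
          rw [show (j : ℂ) * Complex.I * (Real.pi : ℂ)
              = (j : ℂ) * Complex.I * ((-Real.pi : ℝ) : ℂ) + (j : ℂ) * (2 * (Real.pi : ℂ) * Complex.I)
              by push_cast; ring]
          rw [Complex.exp_add, Complex.exp_int_mul_two_pi_mul_I, mul_one]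
        rw [this, sub_self, zero_div, mul_zero]
    rw [hint, Finset.sum_congr rfl hval, Finset.sum_ite_eq' J 0 (fun _ => c 0 * (2 * Real.pi))]
    have h0J : (0 : ℤ) ∈ J := by
      rw [hJ, Finset.mem_Icc]
      constructor <;> omega
    rw [if_pos h0J]
    have h2π : (2 * Real.pi : ℂ) ≠ 0 := by
      push_cast
      exact mul_ne_zero two_ne_zero hπ
    field_simp
    try ring
  -- RHS = c 0
  rw [hLHS]
  have hSz : ∑ k ∈ Finset.Icc 1 n, p (z k) + ∑ k ∈ Finset.Icc 1 n, p (zt k)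
      = c 0 * (2 * n) := by
    have hps : ∀ k ∈ Finset.Icc 1 n, p (z k) + p (zt k)
        = ∑ j ∈ J, c j * (z k ^ j + zt k ^ j) := by
      intro k hk
      rw [hp (z k) (by rw [hz k hk]; exact Complex.exp_ne_zero _),
          hp (zt k) (by rw [hzt k hk]; exact Complex.exp_ne_zero _),
          ← Finset.sum_add_distrib]
      exact Finset.sum_congr rfl fun j _ => by ring
    rw [← Finset.sum_add_distrib, Finset.sum_congr rfl hps, Finset.sum_comm]
    have hinner : ∀ j ∈ J, ∑ k ∈ Finset.Icc 1 n, c j * (z k ^ j + zt k ^ j)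
        = if j = 0 then c 0 * (2 * n) else 0 := by
      intro j hj
      rcases eq_or_ne j 0 with rfl | hj0
      · simp only [if_pos rfl, zpow_zero]
        rw [Finset.sum_const]
        rw [Nat.card_Icc]
        push_cast
        simp
        try ring
      · rw [if_neg hj0, ← Finset.mul_sum]
        have : ∑ k ∈ Finset.Icc 1 n, (z k ^ j + zt k ^ j) = 0 := by
          rw [Finset.sum_congr rfl (fun k hk => ?_)]
          · exact node_sum_aux n hn θ j hj hj0
          · rw [hz k hk, hzt k hk, ← Complex.exp_int_mul, ← Complex.exp_int_mul]
        rw [this, mul_zero]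
    rw [Finset.sum_congr rfl hinner, Finset.sum_ite_eq' J 0 (fun _ => c 0 * (2 * n))]
    rw [if_pos (by rw [hJ, Finset.mem_Icc]; constructor <;> omega)]
  rw [← mul_add (1 / (n : ℂ)), hSz]
  field_simp
  try ring
end

section
/- For every n ≥ 1 and every x ∈ ℝ such that none of x + (k−1)π/n (k = 1,…,n) is a multiple of π, the identity (1/n)·∑_{k=1}^{n} cot(x + (k−1)π/n) = cot(n x) holds. -/
open Real Finset Complex

-- product formula for any primitive root
lemma prod_sub_pow_root {n : ℕ} (hn : 1 ≤ n) {ζ : ℂ} (hζ : IsPrimitiveRoot ζ n) (t : ℂ) :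
    ∏ k ∈ Finset.range n, (t - ζ ^ k) = t ^ n - 1 := by
  have h := X_pow_sub_C_eq_prod hζ (Nat.lt_of_lt_of_le Nat.zero_lt_one hn) (one_pow n)
  have := congrArg (Polynomial.eval t) h
  simpa [Polynomial.eval_prod] using this.symm

lemma core_sum {n : ℕ} (hn : 1 ≤ n) {ζ : ℂ} (hζ : IsPrimitiveRoot ζ n) {w : ℂ}
    (hw : w ^ n ≠ 1) :
    ∑ k ∈ Finset.range n, 1 / (1 - w * ζ ^ k) = n / (1 - w ^ n) := by
  have hζ0 : ζ ≠ 0 := hζ.ne_zero (by omega)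
  have hζn : ζ ^ n = 1 := hζ.pow_eq_one
  have hne : ∀ k, 1 - w * ζ ^ k ≠ 0 := by
    intro k h
    apply hw
    have h1 : w * ζ ^ k = 1 := by linear_combination -h
    have h2 : (ζ ^ k) ^ n = 1 := by rw [← pow_mul, mul_comm, pow_mul, hζn, one_pow]
    have h3 := congrArg (· ^ n) h1
    simp only [mul_pow, h2, mul_one, one_pow] at h3
    exact h3
  have h1w : 1 - w ^ n ≠ 0 := fun h => hw (by linear_combination -h)
  rcases eq_or_ne w 0 with rfl | hw0
  · simp [zero_pow (by omega : n ≠ 0)]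
  have hζinv : IsPrimitiveRoot ζ⁻¹ n := hζ.inv
  have hGfun : (fun t : ℂ => ∏ k ∈ Finset.range n, (1 - t * ζ ^ k)) =
      fun t : ℂ => (∏ k ∈ Finset.range n, (-ζ ^ k)) * (t ^ n - 1) := by
    funext t
    rw [← prod_sub_pow_root hn hζinv t, ← Finset.prod_mul_distrib]
    refine Finset.prod_congr rfl fun k _ => ?_
    have : ζ ^ k * (ζ⁻¹) ^ k = 1 := by
      rw [inv_pow, mul_inv_cancel₀ (pow_ne_zero _ hζ0)]
    linear_combination -this
  have hw1 : w ^ n - 1 ≠ 0 := sub_ne_zero.mpr hw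
  have hcne : (∏ k ∈ Finset.range n, (-ζ ^ k)) ≠ 0 :=
    Finset.prod_ne_zero_iff.mpr fun k _ => neg_ne_zero.mpr (pow_ne_zero _ hζ0)
  have hL : logDeriv (fun t : ℂ => ∏ k ∈ Finset.range n, (1 - t * ζ ^ k)) w =
      ∑ k ∈ Finset.range n, (-ζ ^ k) / (1 - w * ζ ^ k) := by
    have hp := logDeriv_prod (s := Finset.range n) (f := fun k (t : ℂ) => 1 - t * ζ ^ k) (x := w)
      (fun k _ => hne k) (fun k _ => (differentiableAt_id.mul_const _).const_sub 1)
    refine Eq.trans (by exact hp) ?_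
    refine Finset.sum_congr rfl fun k _ => ?_
    rw [logDeriv_apply]
    congr 1
    have : HasDerivAt (fun t : ℂ => 1 - t * ζ ^ k) (-ζ ^ k) w := by
      simpa using ((hasDerivAt_id w).mul_const (ζ ^ k)).const_sub 1
    exact this.deriv
  have hR : logDeriv (fun t : ℂ => ∏ k ∈ Finset.range n, (1 - t * ζ ^ k)) w =
      (n * w ^ (n - 1)) / (w ^ n - 1) := by
    rw [hGfun, logDeriv_const_mul _ _ hcne, logDeriv_apply]
    congr 1
    have : HasDerivAt (fun t : ℂ => t ^ n - 1) ((n : ℂ) * w ^ (n - 1)) w := by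
      simpa using (hasDerivAt_pow n w).sub_const 1
    exact this.deriv
  have E : ∑ k ∈ Finset.range n, (-ζ ^ k) / (1 - w * ζ ^ k) = (n * w ^ (n - 1)) / (w ^ n - 1) := by
    rw [← hL, hR]
  have hpow : w * w ^ (n - 1) = w ^ n := by
    rw [← pow_succ']
    congr 1
    omega
  have E2 : ∑ k ∈ Finset.range n, w * ((-ζ ^ k) / (1 - w * ζ ^ k)) = (n * w ^ n) / (w ^ n - 1) := by
    rw [← Finset.mul_sum, E, mul_div_assoc']
    congr 1
    linear_combination (n : ℂ) * hpow
  have E3 : ∀ k ∈ Finset.range n, w * ((-ζ ^ k) / (1 - w * ζ ^ k)) = 1 - 1 / (1 - w * ζ ^ k) := by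
    intro k _
    field_simp [hne k]
    ring
  rw [Finset.sum_congr rfl E3, Finset.sum_sub_distrib, Finset.sum_const, Finset.card_range,
    nsmul_eq_mul, mul_one, eq_div_iff hw1] at E2
  rw [eq_div_iff h1w]
  linear_combination E2

lemma sin_ne_zero_exp_ne_one {z : ℂ} (h : Complex.sin z ≠ 0) : Complex.exp (2 * I * z) ≠ 1 := by
  intro h1
  apply h
  rw [Complex.sin_eq_zero_iff]
  obtain ⟨k, hk⟩ := Complex.exp_eq_one_iff.mp h1
  refine ⟨k, ?_⟩
  have h2 : (2 * I) * z = (2 * I) * ((k : ℂ) * π) := by linear_combination hk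
  exact mul_left_cancel₀ (by simp [Complex.I_ne_zero] : (2 * I : ℂ) ≠ 0) h2

lemma key_cot_sum (n : ℕ) (hn : 1 ≤ n) (z : ℂ)
    (h : ∀ k ∈ Finset.range n, Complex.sin (z + k * π / n) ≠ 0) :
    ∑ k ∈ Finset.range n, Complex.cot (z + k * π / n) = n * Complex.cot (n * z) := by
  have hn0 : (n : ℂ) ≠ 0 := Nat.cast_ne_zero.mpr (by omega)
  set ζ : ℂ := Complex.exp (2 * π * I / n) with hζdef
  have hζ : IsPrimitiveRoot ζ n := Complex.isPrimitiveRoot_exp n (by omega)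
  have hζn : ζ ^ n = 1 := hζ.pow_eq_one
  set w : ℂ := Complex.exp (2 * I * z) with hwdef
  have hwk : ∀ k : ℕ, Complex.exp (2 * I * (z + k * π / n)) = w * ζ ^ k := by
    intro k
    rw [hwdef, hζdef, ← Complex.exp_nat_mul, ← Complex.exp_add]
    congr 1
    field_simp
  have hne1 : ∀ k ∈ Finset.range n, w * ζ ^ k ≠ 1 := by
    intro k hk
    rw [← hwk k]
    exact sin_ne_zero_exp_ne_one (h k hk)
  have hwn : w ^ n ≠ 1 := by
    intro hw1
    have hp : ∏ k ∈ Finset.range n, (w - ζ ^ k) = 0 := by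
      rw [prod_sub_pow_root hn hζ, hw1, sub_self]
    obtain ⟨k, hk, hk0⟩ := Finset.prod_eq_zero_iff.mp hp
    have hwk' : w = ζ ^ k := by linear_combination hk0
    rcases Nat.eq_zero_or_pos k with rfl | hkpos
    · exact hne1 0 (Finset.mem_range.mpr (by omega)) (by simpa using hwk')
    · refine hne1 (n - k) (Finset.mem_range.mpr (by have := Finset.mem_range.mp hk; omega)) ?_
      rw [hwk', ← pow_add, show k + (n - k) = n by have := Finset.mem_range.mp hk; omega, hζn]
  have h1w : 1 - w ^ n ≠ 0 := fun hh => hwn (by linear_combination -hh)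
  have hnek : ∀ k ∈ Finset.range n, 1 - w * ζ ^ k ≠ 0 := fun k hk hh =>
    hne1 k hk (by linear_combination -hh)
  have hwnz : Complex.exp (2 * I * (n * z)) = w ^ n := by
    rw [hwdef, ← Complex.exp_nat_mul]
    congr 1
    ring
  have hterm : ∀ k ∈ Finset.range n, Complex.cot (z + k * π / n) =
      (-1 + 2 * (1 / (1 - w * ζ ^ k))) / I := by
    intro k hk
    rw [Complex.cot_eq_exp_ratio, hwk k]
    field_simp [hnek k hk]
    ring
  rw [Finset.sum_congr rfl hterm, ← Finset.sum_div, Finset.sum_add_distrib, Finset.sum_const,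
    Finset.card_range, ← Finset.mul_sum, core_sum hn hζ hwn, Complex.cot_eq_exp_ratio, hwnz]
  field_simp
  ring

theorem cot_summation_identity (n : ℕ) (hn : 1 ≤ n) (x : ℝ)
    (hx : ∀ k ∈ Finset.Icc 1 n, ∀ m : ℤ, x + (k - 1 : ℝ) * Real.pi / n ≠ m * Real.pi) :
    (1 / (n : ℝ)) * ∑ k ∈ Finset.Icc 1 n, Real.cot (x + (k - 1 : ℝ) * Real.pi / n) =
      Real.cot (n * x) := by
  have hn0 : (n : ℝ) ≠ 0 := Nat.cast_ne_zero.mpr (by omega)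
  have hsin : ∀ i ∈ Finset.range n, Real.sin (x + i * π / n) ≠ 0 := by
    intro i hi
    rw [Real.sin_ne_zero_iff]
    intro m hm
    refine hx (i + 1) (Finset.mem_Icc.mpr ⟨by omega, by have := Finset.mem_range.mp hi; omega⟩) m ?_
    push_cast
    rw [show ((i : ℝ) + 1 - 1) = (i : ℝ) by ring, ← hm]
  have hkey := key_cot_sum n hn x (by
    intro k hk
    have : (↑x + (k : ℂ) * ↑π / ↑n) = ((x + k * π / n : ℝ) : ℂ) := by push_cast; ring
    rw [this, ← Complex.ofReal_sin]
    exact_mod_cast hsin k hk)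
  have hsum : ∑ k ∈ Finset.Icc 1 n, Real.cot (x + (k - 1 : ℝ) * Real.pi / n) =
      ∑ i ∈ Finset.range n, Real.cot (x + i * π / n) := by
    rw [← Finset.Ico_add_one_right_eq_Icc, Finset.sum_Ico_eq_sum_range, show n + 1 - 1 = n from rfl]
    refine Finset.sum_congr rfl fun i _ => ?_
    push_cast
    ring_nf
  have hreal : ∑ i ∈ Finset.range n, Real.cot (x + i * π / n) = n * Real.cot (n * x) := by
    have hc : ((∑ i ∈ Finset.range n, Real.cot (x + i * π / n) : ℝ) : ℂ) =
        ((n * Real.cot (n * x) : ℝ) : ℂ) := by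
      push_cast [Complex.ofReal_cot]
      convert hkey using 2
    exact_mod_cast hc
  rw [hsum, hreal]
  field_simp
end

section
/- (Pointwise stability of the prescribed-node Szegő rule for the Hilbert transform) Let f be continuous and 2π-periodic. For each φ and n ≥ 2, define H_n^{pr}f(φ) = (1/n)∑_{k=1}^{n}(f(θ_k) − f(φ))/tan((θ_k−φ)/2) with θ_k = φ + π/(4n) + 2kπ/n. Then |H_n^{pr}f(φ)| ≤ C·(log n)·‖f‖_∞ for a constant C independent of n, f, and φ. -/
open Complex Real Finset

lemma aux_sin_bound (n k : ℕ) (hn : 2 ≤ n) (hk1 : 1 ≤ k) (hkn : k ≤ n) :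
    |Real.sin (Real.pi / (8 * n) + k * Real.pi / n)|⁻¹ ≤
      4 * n * ((k : ℝ)⁻¹ + ((4 * (n - k) + 1 : ℕ) : ℝ)⁻¹) := by
  have hπ := Real.pi_pos
  have hN2 : (2 : ℝ) ≤ n := by exact_mod_cast hn
  have hN0 : (0 : ℝ) < n := by linarith
  have hK1 : (1 : ℝ) ≤ k := by exact_mod_cast hk1
  have hK0 : (0 : ℝ) < k := by linarith
  have hKN : (k : ℝ) ≤ n := by exact_mod_cast hkn
  have hcast : ((4 * (n - k) + 1 : ℕ) : ℝ) = 4 * ((n : ℝ) - k) + 1 := by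
    push_cast [Nat.cast_sub hkn]; ring
  set x : ℝ := Real.pi / (8 * n) + k * Real.pi / n with hxdef
  have hx0 : 0 < x := by positivity
  rcases eq_or_lt_of_le hkn with heq | hlt
  · -- k = n
    subst heq
    have hx : x = Real.pi / (8 * k) + Real.pi := by
      rw [hxdef]; field_simp
    have h8 : 0 < Real.pi / (8 * k) := by positivity
    have h2 : Real.pi / (8 * k) ≤ Real.pi / 2 := by
      rw [div_le_div_iff₀ (by positivity) (by norm_num)]; nlinarith
    have hs : Real.sin x = -Real.sin (Real.pi / (8 * k)) := by rw [hx, Real.sin_add_pi]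
    have hlow : 1 / (4 * (k : ℝ)) ≤ Real.sin (Real.pi / (8 * k)) := by
      have h := Real.mul_le_sin h8.le h2
      calc 1 / (4 * (k : ℝ)) = 2 / Real.pi * (Real.pi / (8 * k)) := by
            field_simp; ring
        _ ≤ _ := h
    have hsinpos : 0 < Real.sin (Real.pi / (8 * k)) :=
      lt_of_lt_of_le (by positivity) hlow
    rw [hs, abs_neg, abs_of_pos hsinpos]
    have h1 : (Real.sin (Real.pi / (8 * k)))⁻¹ ≤ (1 / (4 * (k : ℝ)))⁻¹ := by
      exact inv_anti₀ (by positivity) hlow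
    have h1' : (1 / (4 * (k : ℝ)))⁻¹ = 4 * k := by
      rw [one_div, inv_inv]
    rw [h1'] at h1
    refine h1.trans ?_
    have hcc : ((4 * (k - k) + 1 : ℕ) : ℝ) = 1 := by simp
    rw [hcc]
    have hinvnn : (0 : ℝ) ≤ (k : ℝ)⁻¹ := by positivity
    nlinarith
  · -- k < n
    have hJ1 : (1 : ℝ) ≤ (n : ℝ) - k := by
      have : (k : ℝ) + 1 ≤ n := by exact_mod_cast hlt
      linarith
    have hxeq : x = Real.pi * (8 * k + 1) / (8 * n) := by
      rw [hxdef]; field_simp; ring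
    have hxπ : x < Real.pi := by
      rw [hxeq, div_lt_iff₀ (by positivity)]; nlinarith
    have hsinx : 0 < Real.sin x := Real.sin_pos_of_pos_of_lt_pi hx0 hxπ
    rw [abs_of_pos hsinx]
    have hcastnn : (0 : ℝ) ≤ ((4 * (n - k) + 1 : ℕ) : ℝ)⁻¹ := by positivity
    have hknn : (0 : ℝ) ≤ (k : ℝ)⁻¹ := by positivity
    rcases le_or_gt x (Real.pi / 2) with hhalf | hhalf
    · have h := Real.mul_le_sin hx0.le hhalf
      have he : 2 / Real.pi * x = 1 / (4 * (n : ℝ)) + 2 * k / n := by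
        rw [hxdef]; field_simp; ring
      rw [he] at h
      have hstep : ((k : ℝ) / (4 * n)) ≤ 1 / (4 * (n : ℝ)) + 2 * k / n := by
        rw [div_le_iff₀ (by positivity : (0:ℝ) < 4 * (n:ℝ))]
        have hexp : (1 / (4 * (n : ℝ)) + 2 * k / n) * (4 * n) = 1 + 8 * k := by
          field_simp; ring
        rw [hexp]; linarith
      have hlow : (k : ℝ) / (4 * n) ≤ Real.sin x := hstep.trans h
      have h1 : (Real.sin x)⁻¹ ≤ ((k : ℝ) / (4 * n))⁻¹ :=
        inv_anti₀ (by positivity) hlow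
      rw [inv_div] at h1
      refine h1.trans ?_
      calc 4 * (n : ℝ) / k = 4 * n * (k : ℝ)⁻¹ := by rw [div_eq_mul_inv]
        _ ≤ 4 * n * ((k : ℝ)⁻¹ + ((4 * (n - k) + 1 : ℕ) : ℝ)⁻¹) := by nlinarith
    · have h := Real.mul_le_sin (x := Real.pi - x) (by linarith) (by linarith)
      rw [Real.sin_pi_sub] at h
      have he : 2 / Real.pi * (Real.pi - x) = 2 - (1 / (4 * (n : ℝ)) + 2 * k / n) := by
        rw [hxdef]; field_simp; ring
      rw [he] at h
      have hstep : (4 * ((n : ℝ) - k) + 1) / (4 * n) ≤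
          2 - (1 / (4 * (n : ℝ)) + 2 * k / n) := by
        rw [div_le_iff₀ (by positivity : (0:ℝ) < 4 * (n:ℝ))]
        have hexp : (2 - (1 / (4 * (n : ℝ)) + 2 * k / n)) * (4 * n) = 8 * n - 1 - 8 * k := by
          field_simp; ring
        rw [hexp]; linarith
      have hlow : (4 * ((n : ℝ) - k) + 1) / (4 * n) ≤ Real.sin x := hstep.trans h
      have h1 : (Real.sin x)⁻¹ ≤ ((4 * ((n : ℝ) - k) + 1) / (4 * n))⁻¹ :=
        inv_anti₀ (by positivity) hlow
      rw [inv_div] at h1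
      refine h1.trans ?_
      rw [hcast]
      calc 4 * (n : ℝ) / (4 * ((n : ℝ) - k) + 1)
          = 4 * n * (4 * ((n : ℝ) - k) + 1)⁻¹ := by rw [div_eq_mul_inv]
        _ ≤ 4 * n * ((k : ℝ)⁻¹ + (4 * ((n : ℝ) - k) + 1)⁻¹) := by
            apply mul_le_mul_of_nonneg_left _ (by positivity)
            exact le_add_of_nonneg_left hknn

theorem prescribed_node_pointwise_stability :
    ∃ C : ℝ, 0 < C ∧ ∀ (f : ℝ → ℂ), Continuous f → (∀ x, f (x + 2 * Real.pi) = f x) →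
      ∀ (φ : ℝ) (n : ℕ), 2 ≤ n →
        ‖(1 / (n : ℂ)) * ∑ k ∈ Finset.Icc 1 n,
            (f (φ + Real.pi / (4 * n) + 2 * k * Real.pi / n) - f φ) /
              (Real.tan ((φ + Real.pi / (4 * n) + 2 * k * Real.pi / n - φ) / 2) : ℂ)‖ ≤
          C * Real.log n * ⨆ x : Set.Icc (-Real.pi) Real.pi, ‖f x‖ := by
  refine ⟨64, by norm_num, ?_⟩
  intro f hf hper φ n hn
  have hπ := Real.pi_pos
  set M := ⨆ x : Set.Icc (-Real.pi) Real.pi, ‖f x‖ with hM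
  have hbdd : BddAbove (Set.range fun x : Set.Icc (-Real.pi) Real.pi => ‖f x‖) := by
    rw [show (fun x : Set.Icc (-Real.pi) Real.pi => ‖f ↑x‖)
        = (fun t => ‖f t‖) ∘ ((↑) : Set.Icc (-Real.pi) Real.pi → ℝ) from rfl,
      Set.range_comp, Subtype.range_coe]
    exact isCompact_Icc.bddAbove_image ((continuous_norm.comp hf).continuousOn)
  have hper' : Function.Periodic f (2 * Real.pi) := hper
  have hfM : ∀ t, ‖f t‖ ≤ M := by
    intro t
    obtain ⟨y, hy, hfy⟩ := hper'.exists_mem_Ico (by positivity) t (-Real.pi)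
    rw [hfy]
    have hy' : y ∈ Set.Icc (-Real.pi) Real.pi := ⟨hy.1, by have := hy.2; linarith⟩
    exact le_ciSup hbdd ⟨y, hy'⟩
  have hM0 : 0 ≤ M := le_trans (norm_nonneg _) (hfM 0)
  have hN2 : (2 : ℝ) ≤ n := by exact_mod_cast hn
  have hN0 : (0 : ℝ) < n := by linarith
  have hNne : (n : ℝ) ≠ 0 := ne_of_gt hN0
  have hterm : ∀ k ∈ Finset.Icc 1 n,
      ‖(f (φ + Real.pi / (4 * n) + 2 * k * Real.pi / n) - f φ) /
          (Real.tan ((φ + Real.pi / (4 * n) + 2 * k * Real.pi / n - φ) / 2) : ℂ)‖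
        ≤ 2 * M * (4 * n * ((k : ℝ)⁻¹ + ((4 * (n - k) + 1 : ℕ) : ℝ)⁻¹)) := by
    intro k hk
    rw [Finset.mem_Icc] at hk
    have harg : (φ + Real.pi / (4 * n) + 2 * k * Real.pi / n - φ) / 2
        = Real.pi / (8 * n) + k * Real.pi / n := by field_simp; ring
    rw [harg, Real.tan_eq_sin_div_cos]
    set x : ℝ := Real.pi / (8 * n) + k * Real.pi / n with hxdef
    rw [Complex.ofReal_div, div_div_eq_mul_div, norm_div, norm_mul, Complex.norm_real,
      Complex.norm_real, Real.norm_eq_abs, Real.norm_eq_abs, div_eq_mul_inv]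
    have hsub : ‖f (φ + Real.pi / (4 * n) + 2 * k * Real.pi / n) - f φ‖ ≤ 2 * M := by
      calc ‖f (φ + Real.pi / (4 * n) + 2 * k * Real.pi / n) - f φ‖
          ≤ ‖f (φ + Real.pi / (4 * n) + 2 * k * Real.pi / n)‖ + ‖f φ‖ := by
            exact
              norm_sub_le (f (φ + Real.pi / (4 * n) + 2 * k * Real.pi / n)) (f φ)
        _ ≤ M + M := add_le_add (hfM _) (hfM _)
        _ = 2 * M := by ring
    have hcos : |Real.cos x| ≤ 1 := Real.abs_cos_le_one x
    have hsinv : |Real.sin x|⁻¹ ≤ 4 * n * ((k : ℝ)⁻¹ + ((4 * (n - k) + 1 : ℕ) : ℝ)⁻¹) :=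
      aux_sin_bound n k hn hk.1 hk.2
    have hinv0 : (0 : ℝ) ≤ |Real.sin x|⁻¹ := by positivity
    have hnum : ‖f (φ + Real.pi / (4 * n) + 2 * k * Real.pi / n) - f φ‖ *
        |Real.cos x| ≤ 2 * M * 1 :=
      mul_le_mul hsub hcos (abs_nonneg _) (by linarith)
    calc ‖f (φ + Real.pi / (4 * n) + 2 * k * Real.pi / n) - f φ‖ *
          |Real.cos x| * |Real.sin x|⁻¹
        ≤ 2 * M * 1 * (4 * n * ((k : ℝ)⁻¹ + ((4 * (n - k) + 1 : ℕ) : ℝ)⁻¹)) :=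
          mul_le_mul hnum hsinv hinv0 (by linarith)
      _ = 2 * M * (4 * n * ((k : ℝ)⁻¹ + ((4 * (n - k) + 1 : ℕ) : ℝ)⁻¹)) := by ring
  have hA : ∑ k ∈ Finset.Icc 1 n, (k : ℝ)⁻¹ ≤ 1 + Real.log n := by
    have h := harmonic_le_one_add_log n
    rw [harmonic_eq_sum_Icc] at h
    push_cast at h
    exact h
  have hB : ∑ k ∈ Finset.Icc 1 n, ((4 * (n - k) + 1 : ℕ) : ℝ)⁻¹ ≤ 1 + Real.log n := by
    calc ∑ k ∈ Finset.Icc 1 n, ((4 * (n - k) + 1 : ℕ) : ℝ)⁻¹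
        ≤ ∑ k ∈ Finset.Icc 1 n, ((n + 1 - k : ℕ) : ℝ)⁻¹ := by
          apply Finset.sum_le_sum
          intro k hk
          rw [Finset.mem_Icc] at hk
          have h1 : n + 1 - k ≤ 4 * (n - k) + 1 := by omega
          have h2 : 0 < n + 1 - k := by omega
          apply inv_anti₀
          · exact_mod_cast h2
          · exact_mod_cast h1
      _ = ∑ k ∈ Finset.Icc 1 n, (k : ℝ)⁻¹ := by
          refine Finset.sum_nbij' (fun k => n + 1 - k) (fun k => n + 1 - k) ?_ ?_ ?_ ?_ ?_
          · intro a ha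
            simp only [Finset.mem_Icc] at ha ⊢
            omega
          · intro a ha
            simp only [Finset.mem_Icc] at ha ⊢
            omega
          · intro a ha
            simp only [Finset.mem_Icc] at ha
            show n + 1 - (n + 1 - a) = a
            omega
          · intro a ha
            simp only [Finset.mem_Icc] at ha
            show n + 1 - (n + 1 - a) = a
            omega
          · intro a ha
            rfl
      _ ≤ 1 + Real.log n := hA
  have hsum : ‖∑ k ∈ Finset.Icc 1 n,
      (f (φ + Real.pi / (4 * n) + 2 * k * Real.pi / n) - f φ) /
        (Real.tan ((φ + Real.pi / (4 * n) + 2 * k * Real.pi / n - φ) / 2) : ℂ)‖ ≤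
      ∑ k ∈ Finset.Icc 1 n, 2 * M * (4 * n * ((k : ℝ)⁻¹ + ((4 * (n - k) + 1 : ℕ) : ℝ)⁻¹)) :=
    le_trans (norm_sum_le _ _) (Finset.sum_le_sum hterm)
  have habs1 : ‖(1 / (n : ℂ))‖ = 1 / (n : ℝ) := by
    rw [norm_div, norm_one, Complex.norm_natCast]
  rw [norm_mul, habs1]
  have hsum2 : ∑ k ∈ Finset.Icc 1 n, 2 * M * (4 * n * ((k : ℝ)⁻¹ + ((4 * (n - k) + 1 : ℕ) : ℝ)⁻¹))
      = 8 * M * n * (∑ k ∈ Finset.Icc 1 n, (k : ℝ)⁻¹ +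
          ∑ k ∈ Finset.Icc 1 n, ((4 * (n - k) + 1 : ℕ) : ℝ)⁻¹) := by
    rw [← Finset.sum_add_distrib, Finset.mul_sum]
    exact Finset.sum_congr rfl fun k _ => by ring
  have hstep : 1 / (n : ℝ) * ‖∑ k ∈ Finset.Icc 1 n,
      (f (φ + Real.pi / (4 * n) + 2 * k * Real.pi / n) - f φ) /
        (Real.tan ((φ + Real.pi / (4 * n) + 2 * k * Real.pi / n - φ) / 2) : ℂ)‖ ≤
      1 / (n : ℝ) * (8 * M * n * ((1 + Real.log n) + (1 + Real.log n))) := by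
    apply mul_le_mul_of_nonneg_left _ (by positivity)
    refine hsum.trans ?_
    rw [hsum2]
    have h8 : (0 : ℝ) ≤ 8 * M * n := by positivity
    exact mul_le_mul_of_nonneg_left (add_le_add hA hB) h8
  refine hstep.trans ?_
  have hlog2 : (0.6931471803 : ℝ) < Real.log 2 := Real.log_two_gt_d9
  have hmono : Real.log 2 ≤ Real.log n := Real.log_le_log (by norm_num) hN2
  have heq : 1 / (n : ℝ) * (8 * M * n * ((1 + Real.log n) + (1 + Real.log n)))
      = 16 * M * (1 + Real.log n) := by field_simp; ring
  rw [heq]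
  nlinarith [hM0, hlog2, hmono, mul_le_mul_of_nonneg_left hmono hM0]
end

section
/- If Q is a trigonometric polynomial of degree at most n, then (π/n)·‖Q′‖_∞ ≤ C·ω(Q, 1/n) ≤ C′·(π/n)·‖Q′‖_∞ and moreover ω(f,1/n) ≤ 4∫_{1/(2n)}^{1/n} ω(f,t)/t dt for any continuous 2π-periodic f, where C, C′ are absolute constants. -/
open Complex Real Finset MeasureTheory

noncomputable def TP (n : ℕ) (d : ℕ → ℂ) (x : ℝ) : ℂ :=
  ∑ j ∈ Finset.range (2 * n + 1), d j * Complex.exp ((((j : ℝ) - n : ℝ) : ℂ) * Complex.I * (x : ℂ))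

noncomputable def PP (n : ℕ) (d : ℕ → ℂ) (z : ℂ) : ℂ :=
  ∑ j ∈ Finset.range (2 * n + 1), d j * z ^ j

noncomputable def PPd (n : ℕ) (d : ℕ → ℂ) (z : ℂ) : ℂ :=
  ∑ j ∈ Finset.range (2 * n + 1), d j * (j * z ^ (j - 1))

noncomputable def QQ (n : ℕ) (d : ℕ → ℂ) (w : ℂ) : ℂ :=
  ∑ j ∈ Finset.range (2 * n + 1), d j * w ^ (2 * n - j)

lemma abs_exp_real_mul_I_mul (c x : ℝ) : ‖Complex.exp ((c : ℂ) * Complex.I * (x : ℂ))‖ = 1 := by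
  rw [Complex.norm_exp]
  have : ((c : ℂ) * Complex.I * (x : ℂ)).re = 0 := by simp
  rw [this, Real.exp_zero]

lemma tp_abs_le (n : ℕ) (d : ℕ → ℂ) (x : ℝ) :
    ‖TP n d x‖ ≤ ∑ j ∈ Finset.range (2 * n + 1), ‖d j‖ := by
  refine (norm_sum_le _ _).trans (le_of_eq (Finset.sum_congr rfl fun j _ => ?_))
  rw [norm_mul, abs_exp_real_mul_I_mul, mul_one]

lemma tp_hasDerivAt (n : ℕ) (d : ℕ → ℂ) (x : ℝ) :
    HasDerivAt (TP n d)
      (TP n (fun j => (((j : ℝ) - n : ℝ) : ℂ) * Complex.I * d j) x) x := by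
  have h : ∀ j ∈ Finset.range (2 * n + 1), HasDerivAt
      (fun y : ℝ => d j * Complex.exp ((((j : ℝ) - n : ℝ) : ℂ) * Complex.I * (y : ℂ)))
      ((((j : ℝ) - n : ℝ) : ℂ) * Complex.I * d j *
        Complex.exp ((((j : ℝ) - n : ℝ) : ℂ) * Complex.I * (x : ℂ))) x := by
    intro j _
    set c : ℂ := (((j : ℝ) - n : ℝ) : ℂ)
    have h1 : HasDerivAt (fun z : ℂ => c * Complex.I * z) (c * Complex.I) (x : ℂ) := by
      simpa using (hasDerivAt_id (x : ℂ)).const_mul (c * Complex.I)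
    have h2 : HasDerivAt (fun z : ℂ => Complex.exp (c * Complex.I * z))
        (Complex.exp (c * Complex.I * (x : ℂ)) * (c * Complex.I)) (x : ℂ) :=
      (Complex.hasDerivAt_exp _).comp _ h1
    have h3 := (h2.comp_ofReal).const_mul (d j)
    convert h3 using 1
    · rfl
    ring
  have := HasDerivAt.fun_sum h
  exact this

lemma pp_hasDerivAt (n : ℕ) (d : ℕ → ℂ) (z : ℂ) :
    HasDerivAt (PP n d) (PPd n d z) z := by
  refine HasDerivAt.fun_sum fun j _ => ?_
  simpa using (hasDerivAt_pow j z).const_mul (d j)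

lemma pp_diff (n : ℕ) (d : ℕ → ℂ) : Differentiable ℂ (PP n d) :=
  fun z => (pp_hasDerivAt n d z).differentiableAt

lemma qq_diff (n : ℕ) (d : ℕ → ℂ) : Differentiable ℂ (QQ n d) := by
  refine Differentiable.fun_sum fun j _ => ?_
  exact (differentiable_pow _).const_mul _

lemma pp_circle_eq (n : ℕ) (d : ℕ → ℂ) (x : ℝ) :
    PP n d (Complex.exp ((x : ℂ) * Complex.I)) =
      Complex.exp ((((n : ℝ) * x : ℝ) : ℂ) * Complex.I) * TP n d x := by
  unfold PP TP
  rw [Finset.mul_sum]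
  refine Finset.sum_congr rfl fun j _ => ?_
  have h1 : (Complex.exp ((x : ℂ) * Complex.I)) ^ j = Complex.exp ((j : ℂ) * ((x : ℂ) * Complex.I)) :=
    (Complex.exp_nat_mul _ j).symm
  have h2 : ((j : ℂ)) * ((x : ℂ) * Complex.I) =
      (((n : ℝ) * x : ℝ) : ℂ) * Complex.I + (((j : ℝ) - n : ℝ) : ℂ) * Complex.I * (x : ℂ) := by
    push_cast; ring
  rw [h1, h2, Complex.exp_add]
  ring

lemma pp_bound_circle (n : ℕ) (d : ℕ → ℂ) (M : ℝ)
    (hM : ∀ x : ℝ, ‖TP n d x‖ ≤ M) {z : ℂ} (hz : ‖z‖ = 1) :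
    ‖PP n d z‖ ≤ M := by
  obtain ⟨θ, rfl⟩ := (Complex.norm_eq_one_iff z).1 hz
  rw [pp_circle_eq, norm_mul, Complex.norm_exp_ofReal_mul_I, one_mul]
  exact hM θ

lemma pp_bound_ball (n : ℕ) (d : ℕ → ℂ) (M : ℝ)
    (hM : ∀ x : ℝ, ‖TP n d x‖ ≤ M) {z : ℂ} (hz : ‖z‖ ≤ 1) :
    ‖PP n d z‖ ≤ M := by
  have hb : Bornology.IsBounded (Metric.ball (0 : ℂ) 1) := Metric.isBounded_ball
  have hd : DiffContOnCl ℂ (PP n d) (Metric.ball 0 1) :=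
    (pp_diff n d).diffContOnCl
  have hfr : ∀ w ∈ frontier (Metric.ball (0 : ℂ) 1), ‖PP n d w‖ ≤ M := by
    rw [frontier_ball (0 : ℂ) one_ne_zero]
    intro w hw
    have : ‖w‖ = 1 := by
      simpa using mem_sphere_zero_iff_norm.1 hw
    exact pp_bound_circle n d M hM this
  have hcl : z ∈ closure (Metric.ball (0 : ℂ) 1) := by
    rw [closure_ball (0 : ℂ) one_ne_zero]
    simpa [Metric.mem_closedBall, Complex.dist_eq] using hz
  exact Complex.norm_le_of_forall_mem_frontier_norm_le hb hd hfr hcl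

lemma qq_eq (n : ℕ) (d : ℕ → ℂ) {w : ℂ} (hw : w ≠ 0) :
    QQ n d w = w ^ (2 * n) * PP n d w⁻¹ := by
  unfold QQ PP
  rw [Finset.mul_sum]
  refine Finset.sum_congr rfl fun j hj => ?_
  have hj2 : j ≤ 2 * n := by
    have := Finset.mem_range.1 hj; omega
  rw [pow_sub₀ w hw hj2]; ring

lemma qq_bound_ball (n : ℕ) (d : ℕ → ℂ) (M : ℝ)
    (hM : ∀ x : ℝ, ‖TP n d x‖ ≤ M) {w : ℂ} (hw : ‖w‖ ≤ 1) :
    ‖QQ n d w‖ ≤ M := by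
  have hb : Bornology.IsBounded (Metric.ball (0 : ℂ) 1) := Metric.isBounded_ball
  have hd : DiffContOnCl ℂ (QQ n d) (Metric.ball 0 1) :=
    (qq_diff n d).diffContOnCl
  have hfr : ∀ w ∈ frontier (Metric.ball (0 : ℂ) 1), ‖QQ n d w‖ ≤ M := by
    rw [frontier_ball (0 : ℂ) one_ne_zero]
    intro v hv
    have hv1 : ‖v‖ = 1 := by
      simpa using mem_sphere_zero_iff_norm.1 hv
    have hv0 : v ≠ 0 := by
      intro h; rw [h] at hv1; simp at hv1
    have hQ : ‖QQ n d v‖ = ‖PP n d v⁻¹‖ := by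
      rw [qq_eq n d hv0, norm_mul, norm_pow, hv1, one_pow, one_mul]
    show ‖QQ n d v‖ ≤ M
    rw [hQ]
    exact pp_bound_circle n d M hM (by rw [norm_inv, hv1, inv_one])
  have hcl : w ∈ closure (Metric.ball (0 : ℂ) 1) := by
    rw [closure_ball (0 : ℂ) one_ne_zero]
    simpa [Metric.mem_closedBall, Complex.dist_eq] using hw
  exact Complex.norm_le_of_forall_mem_frontier_norm_le hb hd hfr hcl

lemma pp_bound_outer (n : ℕ) (d : ℕ → ℂ) (M : ℝ)
    (hM : ∀ x : ℝ, ‖TP n d x‖ ≤ M) {z : ℂ} (hz : 1 ≤ ‖z‖) :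
    ‖PP n d z‖ ≤ M * ‖z‖ ^ (2 * n) := by
  have hz0 : z ≠ 0 := by
    intro h; rw [h] at hz; simp at hz; linarith
  have hzi : z⁻¹ ≠ 0 := inv_ne_zero hz0
  have hQ : QQ n d z⁻¹ = (z⁻¹) ^ (2 * n) * PP n d z := by
    simpa [inv_inv] using qq_eq n d hzi
  have hPP : PP n d z = z ^ (2 * n) * QQ n d z⁻¹ := by
    rw [hQ, ← mul_assoc, ← mul_pow, mul_inv_cancel₀ hz0, one_pow, one_mul]
  rw [hPP, norm_mul, norm_pow]
  rw [mul_comm M _]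
  refine mul_le_mul_of_nonneg_left ?_ (by positivity)
  refine qq_bound_ball n d M hM ?_
  rw [norm_inv]
  exact inv_le_one_of_one_le₀ hz

lemma ppd_bound (n : ℕ) (hn : 1 ≤ n) (d : ℕ → ℂ) (M : ℝ)
    (hM : ∀ x : ℝ, ‖TP n d x‖ ≤ M) (x : ℝ) :
    ‖PPd n d (Complex.exp ((x : ℂ) * Complex.I))‖ ≤ Real.exp 2 * n * M := by
  have hM0 : 0 ≤ M := (norm_nonneg _).trans (hM 0)
  have hnR : (0:ℝ) < n := by exact_mod_cast Nat.lt_of_lt_of_le Nat.zero_lt_one hn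
  set ζ : ℂ := Complex.exp ((x : ℂ) * Complex.I) with hζdef
  have hζ : ‖ζ‖ = 1 := Complex.norm_exp_ofReal_mul_I x
  have hR : (0:ℝ) < 1 / n := by positivity
  have hone : (1:ℝ) ≤ 1 + 1 / n := by have := hR; linarith
  have hsp : ∀ z ∈ Metric.sphere ζ (1 / n), ‖PP n d z‖ ≤ M * (1 + 1 / n) ^ (2 * n) := by
    intro z hz
    have hd : ‖z - ζ‖ = 1 / n := by
      simpa [Complex.dist_eq] using Metric.mem_sphere.1 hz
    have hzabs : ‖z‖ ≤ 1 + 1 / n := by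
      calc ‖z‖ = ‖ζ + (z - ζ)‖ := by ring_nf
        _ ≤ ‖ζ‖ + ‖z - ζ‖ := norm_add_le _ _
        _ = 1 + 1 / n := by rw [hζ, hd]
    by_cases h1 : ‖z‖ ≤ 1
    · calc ‖PP n d z‖ ≤ M := pp_bound_ball n d M hM h1
        _ ≤ M * (1 + 1 / n) ^ (2 * n) := le_mul_of_one_le_right hM0 (one_le_pow₀ hone)
    · push_neg at h1
      calc ‖PP n d z‖ ≤ M * ‖z‖ ^ (2 * n) := pp_bound_outer n d M hM h1.le
        _ ≤ M * (1 + 1 / n) ^ (2 * n) :=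
          mul_le_mul_of_nonneg_left (pow_le_pow_left₀ (norm_nonneg _) hzabs _) hM0
  have hder := Complex.norm_deriv_le_of_forall_mem_sphere_norm_le hR
    ((pp_diff n d).diffContOnCl) hsp
  rw [(pp_hasDerivAt n d ζ).deriv] at hder
  have hpow : (1 + 1 / (n:ℝ)) ^ (2 * n) ≤ Real.exp 2 := by
    have h1 : (1:ℝ) + 1 / n ≤ Real.exp (1 / n) := by
      have := Real.add_one_le_exp (1 / (n:ℝ)); linarith
    calc (1 + 1 / (n:ℝ)) ^ (2 * n) ≤ Real.exp (1 / n) ^ (2 * n) :=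
          pow_le_pow_left₀ (by positivity) h1 _
      _ = Real.exp (((2 * n : ℕ) : ℝ) * (1 / n)) := by rw [← Real.exp_nat_mul]
      _ = Real.exp 2 := by congr 1; push_cast; field_simp
  calc ‖PPd n d ζ‖ ≤ M * (1 + 1 / n) ^ (2 * n) / (1 / n) := hder
    _ = M * (1 + 1 / n) ^ (2 * n) * n := by field_simp
    _ ≤ M * Real.exp 2 * n := by
        have := mul_le_mul_of_nonneg_left hpow hM0
        nlinarith
    _ = Real.exp 2 * n * M := by ring

lemma bernsteinTP (n : ℕ) (hn : 1 ≤ n) (d : ℕ → ℂ) (M : ℝ)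
    (hM : ∀ x : ℝ, ‖TP n d x‖ ≤ M) (x : ℝ) :
    ‖TP n (fun j => (((j : ℝ) - n : ℝ) : ℂ) * Complex.I * d j) x‖
      ≤ (Real.exp 2 + 1) * n * M := by
  set d' : ℕ → ℂ := fun j => (((j : ℝ) - n : ℝ) : ℂ) * Complex.I * d j with hd'
  set ζ : ℂ := Complex.exp ((x : ℂ) * Complex.I) with hζdef
  have hζ : ‖ζ‖ = 1 := Complex.norm_exp_ofReal_mul_I x
  have hid : PP n d' ζ = Complex.I * (ζ * PPd n d ζ - (n : ℂ) * PP n d ζ) := by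
    unfold PP PPd
    rw [Finset.mul_sum, Finset.mul_sum, ← Finset.sum_sub_distrib, Finset.mul_sum]
    refine Finset.sum_congr rfl fun j _ => ?_
    simp only [hd']
    rcases Nat.eq_zero_or_pos j with rfl | hj
    · simp only [Complex.ofReal_sub, Complex.ofReal_natCast]; push_cast; ring
    · have h : ζ ^ j = ζ ^ (j - 1) * ζ := by rw [← pow_succ, Nat.sub_add_cancel hj]
      rw [h]; simp only [Complex.ofReal_sub, Complex.ofReal_natCast]; ring
  have habs : ‖TP n d' x‖ = ‖PP n d' ζ‖ := by
    rw [pp_circle_eq n d' x, norm_mul, Complex.norm_exp_ofReal_mul_I, one_mul]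
  rw [habs, hid]
  calc ‖Complex.I * (ζ * PPd n d ζ - (n : ℂ) * PP n d ζ)‖
      = ‖ζ * PPd n d ζ - (n : ℂ) * PP n d ζ‖ := by
        rw [norm_mul, Complex.norm_I, one_mul]
    _ ≤ ‖ζ * PPd n d ζ‖ + ‖(n : ℂ) * PP n d ζ‖ :=
        norm_sub_le _ _
    _ = ‖PPd n d ζ‖ + n * ‖PP n d ζ‖ := by
        rw [norm_mul, hζ, one_mul, norm_mul, Complex.norm_natCast]
    _ ≤ Real.exp 2 * n * M + n * M := by
        have h1 := ppd_bound n hn d M hM x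
        have h2 := pp_bound_circle n d M hM hζ
        have hnn : (0:ℝ) ≤ (n:ℝ) := Nat.cast_nonneg n
        have := mul_le_mul_of_nonneg_left h2 hnn
        simp only [← hζdef] at h1 ⊢
        linarith
    _ = (Real.exp 2 + 1) * n * M := by ring

noncomputable def dcoef (n : ℕ) (a b : ℕ → ℂ) : ℕ → ℂ := fun j =>
  if j < n then (a (n - j) + Complex.I * b (n - j)) / 2
  else if j = n then a 0 / 2
  else (a (j - n) - Complex.I * b (j - n)) / 2

lemma cos_sin_rep (k : ℕ) (A B : ℂ) (x : ℝ) :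
    (A + Complex.I * B) / 2 * Complex.exp (((-((k : ℕ) : ℝ) : ℝ) : ℂ) * Complex.I * (x : ℂ))
      + (A - Complex.I * B) / 2 * Complex.exp (((((k : ℕ) : ℝ) : ℝ) : ℂ) * Complex.I * (x : ℂ))
      = A * (Real.cos ((k : ℝ) * x) : ℝ) + B * (Real.sin ((k : ℝ) * x) : ℝ) := by
  have h1 : ((((k : ℕ) : ℝ) : ℝ) : ℂ) * Complex.I * (x : ℂ) = ((k : ℂ) * x) * Complex.I := by
    push_cast; ring
  have h2 : ((-((k : ℕ) : ℝ) : ℝ) : ℂ) * Complex.I * (x : ℂ) = (-((k : ℂ) * x)) * Complex.I := by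
    push_cast; ring
  have hc : ((Real.cos ((k : ℝ) * x) : ℝ) : ℂ) = Complex.cos ((k : ℂ) * x) := by
    rw [Complex.ofReal_cos]; norm_cast
  have hs : ((Real.sin ((k : ℝ) * x) : ℝ) : ℂ) = Complex.sin ((k : ℂ) * x) := by
    rw [Complex.ofReal_sin]; norm_cast
  rw [h1, h2, Complex.exp_mul_I, Complex.exp_mul_I, Complex.cos_neg, Complex.sin_neg, hc, hs]
  ring_nf
  rw [Complex.I_sq]
  ring

lemma rep (n : ℕ) (hn : 1 ≤ n) (a b : ℕ → ℂ) (x : ℝ) :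
    a 0 / 2 + ∑ k ∈ Finset.Icc 1 n,
        (a k * Real.cos (k * x) + b k * Real.sin (k * x))
      = TP n (dcoef n a b) x := by
  unfold TP
  set t : ℕ → ℂ := fun j =>
    dcoef n a b j * Complex.exp ((((j : ℝ) - n : ℝ) : ℂ) * Complex.I * (x : ℂ)) with ht
  have hsplit : ∑ j ∈ Finset.range (2 * n + 1), t j
      = (∑ j ∈ Finset.range n, t j) + (t n + ∑ i ∈ Finset.range n, t (n + 1 + i)) := by
    have e0 : ∑ j ∈ Finset.range (2 * n + 1), t j
        = ∑ j ∈ Finset.Ico 0 n, t j + ∑ j ∈ Finset.Ico n (2 * n + 1), t j := by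
      rw [Finset.range_eq_Ico,
        ← Finset.sum_Ico_consecutive _ (Nat.zero_le n) (by omega : n ≤ 2 * n + 1)]
    have e1 : ∑ j ∈ Finset.Ico 0 n, t j = ∑ j ∈ Finset.range n, t j := by
      rw [← Finset.range_eq_Ico]
    have e2 : ∑ j ∈ Finset.Ico n (2 * n + 1), t j
        = t n + ∑ i ∈ Finset.range n, t (n + 1 + i) := by
      rw [Finset.sum_eq_sum_Ico_succ_bot (by omega : n < 2 * n + 1),
        Finset.sum_Ico_eq_sum_range]
      have h2 : 2 * n + 1 - (n + 1) = n := by omega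
      rw [h2]
    rw [e0, e1, e2]
  have hrefl : ∑ j ∈ Finset.range n, t j = ∑ i ∈ Finset.range n, t (n - 1 - i) :=
    (Finset.sum_range_reflect t n).symm
  have hRHS : ∑ k ∈ Finset.Icc 1 n, (a k * Real.cos (k * x) + b k * Real.sin (k * x))
      = ∑ i ∈ Finset.range n,
          (a (1 + i) * Real.cos (((1 + i : ℕ) : ℝ) * x)
            + b (1 + i) * Real.sin (((1 + i : ℕ) : ℝ) * x)) := by
    rw [← Finset.Ico_add_one_right_eq_Icc, Finset.sum_Ico_eq_sum_range]
    have hnn : n + 1 - 1 = n := rfl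
    rw [hnn]
  have htn : t n = a 0 / 2 := by
    have hd : dcoef n a b n = a 0 / 2 := by
      unfold dcoef
      rw [if_neg (lt_irrefl n), if_pos rfl]
    calc t n = dcoef n a b n * Complex.exp ((((n : ℝ) - n : ℝ) : ℂ) * Complex.I * (x : ℂ)) := rfl
      _ = a 0 / 2 := by rw [hd, sub_self]; simp
  have hterm : ∀ i ∈ Finset.range n, t (n - 1 - i) + t (n + 1 + i)
      = a (1 + i) * Real.cos (((1 + i : ℕ) : ℝ) * x)
        + b (1 + i) * Real.sin (((1 + i : ℕ) : ℝ) * x) := by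
    intro i hi
    have hi' : i < n := Finset.mem_range.1 hi
    have e1 : n - 1 - i < n := by omega
    have e2 : ¬ (n + 1 + i < n) := by omega
    have e3 : ¬ (n + 1 + i = n) := by omega
    have e4 : n - (n - 1 - i) = 1 + i := by omega
    have e5 : n + 1 + i - n = 1 + i := by omega
    have c1 : ((n - 1 - i : ℕ) : ℝ) - n = -(((1 + i : ℕ) : ℝ)) := by
      have h0 : (n - 1 - i : ℕ) + (1 + i) = n := by omega
      have h1 := congrArg (fun m : ℕ => (m : ℝ)) h0
      push_cast at h1 ⊢
      linarith
    have c2 : ((n + 1 + i : ℕ) : ℝ) - n = ((1 + i : ℕ) : ℝ) := by push_cast; ring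
    rw [ht]
    simp only [dcoef, if_pos e1, if_neg e2, if_neg e3, e4, e5, c1, c2]
    exact cos_sin_rep (1 + i) (a (1 + i)) (b (1 + i)) x
  rw [hsplit, hrefl, htn, hRHS, ← Finset.sum_congr rfl hterm, Finset.sum_add_distrib]
  ring

def MSet' (f : ℝ → ℂ) (t : ℝ) : Set ℝ :=
  {d : ℝ | ∃ x h : ℝ, 0 < h ∧ h ≤ t ∧ d = ‖f (x + h) - f x‖}

lemma partBC (n : ℕ) (hn : 1 ≤ n) (a b : ℕ → ℂ) (Q : ℝ → ℂ) (ωQ : ℝ → ℝ)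
    (hQ : ∀ x, Q x = a 0 / 2 + ∑ k ∈ Finset.Icc 1 n,
      (a k * Real.cos (k * x) + b k * Real.sin (k * x)))
    (hω : ∀ t, ωQ t = sSup (MSet' Q t)) :
    (Real.pi / n) * (⨆ x : ℝ, ‖deriv Q x‖)
        ≤ (4 * Real.pi * (Real.exp 2 + 1)) * ωQ (1 / n) ∧
      ωQ (1 / n) ≤ 1 * ((Real.pi / n) * ⨆ x : ℝ, ‖deriv Q x‖) := by
  have hQT : Q = TP n (dcoef n a b) := funext fun x => (hQ x).trans (rep n hn a b x)
  subst hQT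
  set d : ℕ → ℂ := dcoef n a b with hd
  set d' : ℕ → ℂ := fun j => (((j : ℝ) - n : ℝ) : ℂ) * Complex.I * d j with hd'
  have hder : ∀ x, HasDerivAt (TP n d) (TP n d' x) x := fun x => tp_hasDerivAt n d x
  have hDQ : deriv (TP n d) = fun x => TP n d' x := funext fun x => (hder x).deriv
  have hnR : (0:ℝ) < n := by exact_mod_cast Nat.lt_of_lt_of_le Nat.zero_lt_one hn
  set M : ℝ := ⨆ x : ℝ, ‖deriv (TP n d) x‖ with hM
  have hMeq : M = ⨆ x : ℝ, ‖TP n d' x‖ := by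
    rw [hM]
    exact congrArg _ (funext fun x => by rw [hDQ])
  clear_value M
  have hbdd' : BddAbove (Set.range fun x : ℝ => ‖TP n d' x‖) :=
    ⟨∑ j ∈ Finset.range (2 * n + 1), ‖d' j‖, by
      rintro y ⟨x, rfl⟩; exact tp_abs_le n d' x⟩
  have hMx : ∀ x, ‖TP n d' x‖ ≤ M := fun x => by
    rw [hMeq]; exact le_ciSup hbdd' x
  have hM0 : 0 ≤ M := le_trans (norm_nonneg _) (hMx 0)
  have hlip : ∀ x h : ℝ, 0 ≤ h → ‖TP n d (x + h) - TP n d x‖ ≤ M * h := by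
    intro x h h0
    have h1 := Convex.norm_image_sub_le_of_norm_hasDerivWithin_le
      (fun y _ => (hder y).hasDerivWithinAt) (fun y _ => hMx y) convex_univ
      (Set.mem_univ x) (Set.mem_univ (x + h))
    simpa [Real.norm_eq_abs, _root_.abs_of_nonneg h0] using h1
  have bddS : ∀ t, BddAbove (MSet' (TP n d) t) := by
    intro t
    refine ⟨2 * ∑ j ∈ Finset.range (2 * n + 1), ‖d j‖, ?_⟩
    rintro y ⟨x, h, h1, h2, rfl⟩
    calc ‖TP n d (x + h) - TP n d x‖
        ≤ ‖TP n d (x + h)‖ + ‖TP n d x‖ :=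
          norm_sub_le _ _
      _ ≤ (∑ j ∈ Finset.range (2 * n + 1), ‖d j‖)
          + ∑ j ∈ Finset.range (2 * n + 1), ‖d j‖ :=
          add_le_add (tp_abs_le n d _) (tp_abs_le n d _)
      _ = 2 * ∑ j ∈ Finset.range (2 * n + 1), ‖d j‖ := by ring
  have hneS : ∀ t : ℝ, 0 < t → (MSet' (TP n d) t).Nonempty := fun t ht =>
    ⟨_, 0, t, ht, le_rfl, rfl⟩
  have hω0 : 0 ≤ ωQ (1 / n) := by
    rw [hω]
    exact le_csSup_of_le (bddS _) ⟨0, 1 / n, by positivity, le_rfl, rfl⟩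
      (norm_nonneg _)
  constructor
  · -- part B
    set c₀ : ℝ := Real.exp 2 + 1 with hc₀
    have hc₀1 : 1 ≤ c₀ := by have := Real.exp_pos 2; rw [hc₀]; linarith
    have hbern : ∀ y, ‖TP n (fun j => (((j : ℝ) - n : ℝ) : ℂ) * Complex.I * d' j) y‖ ≤ c₀ * n * M := by
      intro y
      have := bernsteinTP n hn d' M hMx y
      rw [hc₀]
      linarith
    clear_value c₀
    have hc₀0 : 0 < c₀ := by linarith
    set ℓ : ℝ := 1 / (2 * c₀ * n) with hℓ
    have h2cn : (0:ℝ) < 2 * c₀ * n := by positivity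
    have hℓ0 : 0 < ℓ := by rw [hℓ]; positivity
    have hℓn : ℓ ≤ 1 / n := by
      rw [hℓ]
      refine one_div_le_one_div_of_le hnR ?_
      nlinarith
    have h8 : ℓ * (2 * c₀ * n) = 1 := by
      rw [hℓ]
      field_simp
    clear_value ℓ
    have hhalf : c₀ * n * M * ℓ = M / 2 := by linear_combination (M / 2) * h8
    have hlip' : ∀ u v : ℝ, ‖TP n d' u - TP n d' v‖ ≤ (c₀ * n * M) * |u - v| := by
      intro u v
      have h1 := Convex.norm_image_sub_le_of_norm_hasDerivWithin_le
        (fun y _ => (tp_hasDerivAt n d' y).hasDerivWithinAt) (fun y _ => hbern y) convex_univ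
        (Set.mem_univ v) (Set.mem_univ u)
      simpa [Real.norm_eq_abs] using h1
    have key : ∀ ε : ℝ, 0 < ε → M ≤ 4 * c₀ * n * ωQ (1 / n) + 2 * ε := by
      intro ε hε
      have hlt : M - ε < ⨆ x : ℝ, ‖TP n d' x‖ := by rw [← hMeq]; linarith
      obtain ⟨x0, hx0⟩ := exists_lt_of_lt_ciSup hlt
      have hnn : (0:ℝ) ≤ 4 * c₀ * n * ωQ (1 / n) := by positivity
      rcases eq_or_lt_of_le (norm_nonneg (TP n d' x0)) with hm0 | hm0
      · have hMε : M < ε := by rw [← hm0] at hx0; linarith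
        linarith
      · set m : ℝ := ‖TP n d' x0‖ with hm
        set c : ℂ := (starRingEnd ℂ) (TP n d' x0) / (m : ℂ) with hc
        have hmne : (m : ℂ) ≠ 0 := by exact_mod_cast ne_of_gt hm0
        have hcabs : ‖c‖ = 1 := by
          rw [hc, norm_div, Complex.norm_conj, Complex.norm_real, Real.norm_eq_abs, _root_.abs_of_pos hm0, ← hm,
            div_self (ne_of_gt hm0)]
        have hcw : c * TP n d' x0 = (m : ℂ) := by
          rw [hc, div_mul_eq_mul_div, mul_comm ((starRingEnd ℂ) _) _, Complex.mul_conj,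
            div_eq_iff hmne]
          rw [Complex.normSq_eq_norm_sq, ← hm]
          push_cast
          ring
        clear_value m c
        have hg : ∀ x, HasDerivAt (fun y => (c * TP n d y).re) ((c * TP n d' x).re) x := by
          intro x
          have h1 : HasDerivAt (fun y => c * TP n d y) (c * TP n d' x) x :=
            (hder x).const_mul c
          exact Complex.reCLM.hasFDerivAt.comp_hasDerivAt x h1
        have hglow : ∀ y ∈ Set.Icc x0 (x0 + ℓ), M / 2 - ε ≤ (c * TP n d' y).re := by
          intro y hy
          have hyd : |y - x0| ≤ ℓ := by
            rw [abs_le]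
            exact ⟨by linarith [hy.1], by linarith [hy.2]⟩
          have h1 : ‖TP n d' y - TP n d' x0‖ ≤ c₀ * n * M * ℓ := by
            calc ‖TP n d' y - TP n d' x0‖ ≤ (c₀ * n * M) * |y - x0| := hlip' y x0
              _ ≤ c₀ * n * M * ℓ := by
                  refine mul_le_mul_of_nonneg_left hyd ?_
                  positivity
          have h3 : (c * TP n d' y).re = m + (c * (TP n d' y - TP n d' x0)).re := by
            have he : c * TP n d' y = c * TP n d' x0 + c * (TP n d' y - TP n d' x0) := by ring
            rw [he, Complex.add_re, hcw, Complex.ofReal_re]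
          have h4 : -(‖c * (TP n d' y - TP n d' x0)‖)
              ≤ (c * (TP n d' y - TP n d' x0)).re :=
            (abs_le.1 (Complex.abs_re_le_norm _)).1
          have h5 : ‖c * (TP n d' y - TP n d' x0)‖ ≤ M / 2 := by
            rw [norm_mul, hcabs, one_mul]
            linarith
          rw [h3]
          linarith
        have hcont : ContinuousOn (fun y => (c * TP n d y).re) (Set.Icc x0 (x0 + ℓ)) :=
          fun y _ => ((hg y).continuousAt.continuousWithinAt)
        have hdiff : DifferentiableOn ℝ (fun y => (c * TP n d y).re)
            (interior (Set.Icc x0 (x0 + ℓ))) :=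
          fun y _ => ((hg y).differentiableAt.differentiableWithinAt)
        have hderiv2 : ∀ y ∈ interior (Set.Icc x0 (x0 + ℓ)),
            M / 2 - ε ≤ deriv (fun y => (c * TP n d y).re) y := by
          intro y hy
          rw [interior_Icc] at hy
          rw [(hg y).deriv]
          exact hglow y ⟨hy.1.le, hy.2.le⟩
        have hx0mem : x0 ∈ Set.Icc x0 (x0 + ℓ) := ⟨le_rfl, by linarith⟩
        have hx1mem : x0 + ℓ ∈ Set.Icc x0 (x0 + ℓ) := ⟨by linarith, le_rfl⟩
        have hmvt := Convex.mul_sub_le_image_sub_of_le_deriv (convex_Icc x0 (x0 + ℓ))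
          hcont hdiff hderiv2 x0 hx0mem (x0 + ℓ) hx1mem (by linarith)
        have hre : (c * TP n d (x0 + ℓ)).re - (c * TP n d x0).re
            = (c * (TP n d (x0 + ℓ) - TP n d x0)).re := by
          rw [mul_sub, Complex.sub_re]
        have h6 : (c * (TP n d (x0 + ℓ) - TP n d x0)).re
            ≤ ‖TP n d (x0 + ℓ) - TP n d x0‖ := by
          have hra := Complex.re_le_norm (c * (TP n d (x0 + ℓ) - TP n d x0))
          rwa [norm_mul, hcabs, one_mul] at hra
        have hle : (M / 2 - ε) * ℓ ≤ ‖TP n d (x0 + ℓ) - TP n d x0‖ := by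
          calc (M / 2 - ε) * ℓ = (M / 2 - ε) * (x0 + ℓ - x0) := by ring_nf
            _ ≤ (fun y => (c * TP n d y).re) (x0 + ℓ) - (fun y => (c * TP n d y).re) x0 := hmvt
            _ = (c * (TP n d (x0 + ℓ) - TP n d x0)).re := hre
            _ ≤ ‖TP n d (x0 + ℓ) - TP n d x0‖ := h6
        have hmem : ‖TP n d (x0 + ℓ) - TP n d x0‖ ≤ ωQ (1 / n) := by
          rw [hω]
          exact le_csSup (bddS _) ⟨x0, ℓ, hℓ0, hℓn, rfl⟩
        have h7 : (M / 2 - ε) * ℓ ≤ ωQ (1 / n) := le_trans hle hmem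
        have h9 := mul_le_mul_of_nonneg_right h7 h2cn.le
        have h10 : M / 2 - ε ≤ ωQ (1 / n) * (2 * c₀ * n) := by nlinarith
        nlinarith
    have hM4 : M ≤ 4 * c₀ * n * ωQ (1 / n) := by
      refine le_of_forall_pos_le_add ?_
      intro ε hε
      have := key (ε / 2) (by linarith)
      linarith
    have hπn : (0:ℝ) ≤ Real.pi / n := by positivity
    calc Real.pi / n * M ≤ Real.pi / n * (4 * c₀ * n * ωQ (1 / n)) :=
          mul_le_mul_of_nonneg_left hM4 hπn
      _ = 4 * Real.pi * c₀ * ωQ (1 / n) := by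
          field_simp
  · -- part C
    rw [hω]
    refine csSup_le (hneS _ (by positivity)) ?_
    rintro y ⟨x, h, h1, h2, rfl⟩
    have hπ : (1:ℝ) ≤ Real.pi := by linarith [Real.pi_gt_three]
    have hinv : (0:ℝ) ≤ (n:ℝ)⁻¹ := by positivity
    calc ‖TP n d (x + h) - TP n d x‖ ≤ M * h := hlip x h h1.le
      _ ≤ M * (1 / n) := mul_le_mul_of_nonneg_left h2 hM0
      _ ≤ 1 * (Real.pi / n * M) := by
          rw [one_mul, one_div, div_eq_mul_inv]
          nlinarith [mul_nonneg (mul_nonneg (sub_nonneg.2 hπ) hM0) hinv]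

def MSet (f : ℝ → ℂ) (t : ℝ) : Set ℝ :=
  {d : ℝ | ∃ x h : ℝ, 0 < h ∧ h ≤ t ∧ d = ‖f (x + h) - f x‖}

lemma partD (f : ℝ → ℂ) (hc : Continuous f) (hper : ∀ x, f (x + 2 * Real.pi) = f x)
    (ω : ℝ → ℝ) (hω : ∀ t, ω t = sSup (MSet f t)) (n : ℕ) (hn : 1 ≤ n) :
    ω (1 / n) ≤ 4 * ∫ t in (1 / (2 * n : ℝ))..(1 / n : ℝ), ω t / t := by
  have hbr : Bornology.IsBounded (Set.range f) :=
    Function.Periodic.isBounded_of_continuous hper (by positivity) hc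
  obtain ⟨B, hB⟩ := isBounded_iff_forall_norm_le.1 hbr
  have hBx : ∀ x, ‖f x‖ ≤ B := fun x => hB _ (Set.mem_range_self x)
  have bdd : ∀ t, BddAbove (MSet f t) := by
    intro t
    refine ⟨2 * B, fun d hd => ?_⟩
    obtain ⟨x, h, _, _, rfl⟩ := hd
    calc ‖f (x + h) - f x‖ ≤ ‖f (x + h)‖ + ‖f x‖ :=
          norm_sub_le _ _
      _ ≤ B + B := add_le_add (hBx _) (hBx _)
      _ = 2 * B := by ring
  have hne : ∀ t : ℝ, 0 < t → (MSet f t).Nonempty := fun t ht =>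
    ⟨_, 0, t, ht, le_rfl, rfl⟩
  have hnR : (0:ℝ) < n := by exact_mod_cast Nat.lt_of_lt_of_le Nat.zero_lt_one hn
  have hmono : ∀ s t : ℝ, 0 < s → s ≤ t → ω s ≤ ω t := by
    intro s t hs hst
    rw [hω, hω]
    exact csSup_le_csSup (bdd t) (hne s hs) (fun d hd => by
      obtain ⟨x, h, h1, h2, rfl⟩ := hd; exact ⟨x, h, h1, h2.trans hst, rfl⟩)
  have hnonneg : ∀ t : ℝ, 0 < t → 0 ≤ ω t := by
    intro t ht
    rw [hω]
    exact le_csSup_of_le (bdd t) ⟨0, t, ht, le_rfl, rfl⟩ (norm_nonneg _)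
  have h2n : (0:ℝ) < 1 / (2 * n) := by positivity
  have hkey : 1 / (2 * (n:ℝ)) = (1 / n) / 2 := by field_simp
  have hsub : ω (1 / n) ≤ 2 * ω (1 / (2 * n)) := by
    rw [hω (1 / n)]
    refine csSup_le (hne _ (by positivity)) ?_
    rintro d ⟨x, h, h1, h2, rfl⟩
    have e1 : ‖f (x + h) - f (x + h / 2)‖ ≤ ω (1 / (2 * n)) := by
      rw [hω]
      refine le_csSup (bdd _) ⟨x + h / 2, h / 2, by positivity, by linarith, ?_⟩
      ring_nf
    have e2 : ‖f (x + h / 2) - f x‖ ≤ ω (1 / (2 * n)) := by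
      rw [hω]
      exact le_csSup (bdd _) ⟨x, h / 2, by positivity, by linarith, rfl⟩
    calc ‖f (x + h) - f x‖
        ≤ ‖f (x + h) - f (x + h / 2)‖ + ‖f (x + h / 2) - f x‖ := by
          simpa using norm_sub_le_norm_sub_add_norm_sub (f (x+h)) (f (x+h/2)) (f x)
      _ ≤ 2 * ω (1 / (2 * n)) := by linarith
  set a : ℝ := 1 / (2 * n) with ha
  set b : ℝ := 1 / n with hb
  have hab : a ≤ b := by
    rw [ha, hb]
    rw [div_le_div_iff₀ (by positivity) hnR]
    nlinarith
  have hωmono : MonotoneOn ω (Set.uIcc a b) := by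
    intro s hs t ht hst
    rw [Set.uIcc_of_le hab] at hs ht
    exact hmono s t (lt_of_lt_of_le h2n hs.1) hst
  have hint : IntervalIntegrable (fun t => ω t / t) volume a b := by
    simp only [div_eq_mul_inv]
    refine hωmono.intervalIntegrable.mul_continuousOn ?_
    refine ContinuousOn.inv₀ continuousOn_id ?_
    intro t ht
    rw [Set.uIcc_of_le hab] at ht
    exact ne_of_gt (lt_of_lt_of_le h2n ht.1)
  have hlow : ω a / 2 ≤ ∫ t in a..b, ω t / t := by
    have hconst : ∫ t in a..b, (ω a * n : ℝ) = ω a * n * (b - a) := by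
      simp; ring
    have hle : ∀ t ∈ Set.Icc a b, (ω a * n : ℝ) ≤ ω t / t := by
      intro t ht
      have ht0 : 0 < t := lt_of_lt_of_le h2n ht.1
      rw [le_div_iff₀ ht0]
      have h1 : ω a * (n * t) ≤ ω a * 1 := by
        refine mul_le_mul_of_nonneg_left ?_ (hnonneg a h2n)
        calc (n:ℝ) * t ≤ n * b := by nlinarith [ht.2]
          _ = 1 := by rw [hb]; field_simp
      calc ω a * n * t = ω a * (n * t) := by ring
        _ ≤ ω a * 1 := h1
        _ = ω a := by ring
        _ ≤ ω t := hmono a t h2n ht.1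
    have := intervalIntegral.integral_mono_on hab (intervalIntegrable_const) hint hle
    rw [hconst] at this
    have hba : b - a = 1 / (2 * n) := by rw [ha, hb]; field_simp; ring
    calc ω a / 2 = ω a * n * (b - a) := by rw [hba]; field_simp
      _ ≤ _ := this
  calc ω (1 / n) ≤ 2 * ω a := hsub
    _ = 4 * (ω a / 2) := by ring
    _ ≤ 4 * ∫ t in a..b, ω t / t := by linarith

theorem trig_poly_derivative_modulus :
    ∃ C C' : ℝ, 0 < C ∧ 0 < C' ∧
      (∀ (n : ℕ), 1 ≤ n → ∀ (a b : ℕ → ℂ) (Q : ℝ → ℂ) (ωQ : ℝ → ℝ),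
        (∀ x, Q x = a 0 / 2 + ∑ k ∈ Finset.Icc 1 n,
          (a k * Real.cos (k * x) + b k * Real.sin (k * x))) →
        (∀ t, ωQ t = sSup {d : ℝ | ∃ x h : ℝ, 0 < h ∧ h ≤ t ∧ d = ‖Q (x + h) - Q x‖}) →
        (Real.pi / n) * (⨆ x : ℝ, ‖deriv Q x‖) ≤ C * ωQ (1 / n) ∧
        ωQ (1 / n) ≤ C' * ((Real.pi / n) * ⨆ x : ℝ, ‖deriv Q x‖)) ∧
      (∀ (f : ℝ → ℂ), Continuous f → (∀ x, f (x + 2 * Real.pi) = f x) →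
        ∀ ω : ℝ → ℝ,
          (∀ t, ω t = sSup {d : ℝ | ∃ x h : ℝ, 0 < h ∧ h ≤ t ∧ d = ‖f (x + h) - f x‖}) →
          ∀ n : ℕ, 1 ≤ n →
            ω (1 / n) ≤ 4 * ∫ t in (1 / (2 * n : ℝ))..(1 / n : ℝ), ω t / t) := by
  refine ⟨4 * Real.pi * (Real.exp 2 + 1), 1, by positivity, one_pos, ?_, ?_⟩
  · intro n hn a b Q ωQ hQ hω
    exact partBC n hn a b Q ωQ hQ hω
  · intro f hc hper ω hω n hn
    exact partD f hc hper ω hω n hn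
end
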